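/- Let Γ be a countable discrete group, k ∈ ℕ, and A ∈ M_k(ℤΓ) a matrix invertible in the Banach algebra M_k(ℓ¹(Γ)). Then for every nonzero x ∈ X_A = {x ∈ ((ℝ/ℤ)^Γ)^k : xA* = 0} one has sup_{s∈Γ} ρ_∞(x_s, 0) ≥ ‖A‖₁⁻¹; in particular, the left-shift action of Γ on X_A is expansive. -/

import Mathlib

/-!
STATEMENT 3: If `A ∈ M_k(ℤΓ)` is invertible in `M_k(ℓ¹(Γ))`, then every nonzero
`x ∈ X_A = {x ∈ ((ℝ/ℤ)^Γ)^k : xA* = 0}` satisfies `sup_s ρ_∞(x_s, 0) ≥ ‖A‖₁⁻¹`; in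
particular the shift action of `Γ` on `X_A` is expansive.
-/

open scoped Classical

namespace Stmt3

variable {Γ : Type*} [Group Γ]

/-- Convolution of two real-valued functions on `Γ`. -/
noncomputable def conv (f g : Γ → ℝ) : Γ → ℝ := fun s => ∑' t, f t * g (t⁻¹ * s)

/-- Convolution product of matrices of real-valued functions on `Γ`. -/
noncomputable def matConv {k n m : ℕ} (A : Matrix (Fin k) (Fin n) (Γ → ℝ))
    (B : Matrix (Fin n) (Fin m) (Γ → ℝ)) : Matrix (Fin k) (Fin m) (Γ → ℝ) :=
  fun i j => fun s => ∑ l, conv (A i l) (B l j) s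

/-- The identity matrix of `M_k(ℓ¹(Γ))`. -/
noncomputable def matOne {k : ℕ} : Matrix (Fin k) (Fin k) (Γ → ℝ) :=
  fun i j s => if i = j ∧ s = 1 then 1 else 0

/-- `f : Γ → ℝ` is absolutely summable, i.e. lies in `ℓ¹(Γ)`. -/
def MemL1 (f : Γ → ℝ) : Prop := Summable fun s => |f s|

/-- An integral group ring element, viewed as a real-valued function on `Γ`. -/
noncomputable def coeMA (f : MonoidAlgebra ℤ Γ) : Γ → ℝ := fun s => (f.coeff s : ℝ)

/-- A matrix over `ℤΓ` viewed as a matrix of real-valued functions on `Γ`. -/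
noncomputable def coeMat {n k : ℕ} (A : Matrix (Fin n) (Fin k) (MonoidAlgebra ℤ Γ)) :
    Matrix (Fin n) (Fin k) (Γ → ℝ) := fun i j => coeMA (A i j)

/-- `A ∈ M_k(ℤΓ)` is invertible in the Banach algebra `M_k(ℓ¹(Γ))`. -/
def InvertibleL1 {k : ℕ} (A : Matrix (Fin k) (Fin k) (MonoidAlgebra ℤ Γ)) : Prop :=
  ∃ B : Matrix (Fin k) (Fin k) (Γ → ℝ), (∀ i j, MemL1 (B i j)) ∧
    matConv (coeMat A) B = matOne ∧ matConv B (coeMat A) = matOne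

/-- The norm `‖A‖₁` of a matrix over `ℤΓ`: the sum of the `ℓ¹`-norms of its entries. -/
noncomputable def normL1 {n k : ℕ} (A : Matrix (Fin n) (Fin k) (MonoidAlgebra ℤ Γ)) : ℝ :=
  ∑ i, ∑ j, (A i j).coeff.sum fun _ c => |(c : ℝ)|

/-- The row vector `x A*`, for `x ∈ (M^Γ)^k` and `A ∈ M_{n×k}(ℤΓ)`. -/
noncomputable def mulStar {k n : ℕ} {M : Type*} [AddCommGroup M]
    (x : Fin k → Γ → M) (A : Matrix (Fin n) (Fin k) (MonoidAlgebra ℤ Γ)) :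
    Fin n → Γ → M :=
  fun i s => ∑ j, (A i j).coeff.sum fun u c => c • x j (s * u)

/-- The closed shift-invariant subgroup `X_A = {x ∈ ((ℝ/ℤ)^Γ)^k : xA* = 0}`. -/
def XA {k : ℕ} (A : Matrix (Fin k) (Fin k) (MonoidAlgebra ℤ Γ)) :
    Set (Fin k → Γ → AddCircle (1 : ℝ)) :=
  {x | mulStar x A = 0}

/-- Expansiveness of the left-shift action of `Γ` on a shift-invariant subgroup
`X ⊆ ((ℝ/ℤ)^Γ)^k`. -/
noncomputable def ShiftExpansive {k : ℕ} (X : Set (Fin k → Γ → AddCircle (1 : ℝ))) : Prop :=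
  ∃ c : ℝ, 0 < c ∧
    ∀ x ∈ X, (⨆ s : Γ, dist (fun j => x j s) (0 : Fin k → AddCircle (1 : ℝ))) < c → x = 0

end Stmt3

set_option linter.unusedSectionVars false

namespace Stmt3

variable {Γ : Type*} [Group Γ]

/-- The quotient map `ℝ → ℝ/ℤ` as an `AddMonoidHom`. -/
noncomputable def qm : ℝ →+ AddCircle (1:ℝ) := QuotientAddGroup.mk' _

lemma qm_coe (r : ℝ) : qm r = (r : AddCircle (1:ℝ)) := rfl

lemma coe_int_zero (n : ℤ) : ((n : ℝ) : AddCircle (1:ℝ)) = 0 := by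
  rw [AddCircle.coe_eq_zero_iff]; exact ⟨n, by simp⟩

lemma norm_lift (a : AddCircle (1:ℝ)) :
    ∃ z : ℝ, (z : AddCircle (1:ℝ)) = a ∧ |z| = ‖a‖ ∧ |z| ≤ 1/2 := by
  obtain ⟨w, rfl⟩ := QuotientAddGroup.mk_surjective a
  refine ⟨w - round w, ?_, ?_, ?_⟩
  · have h1 : ((w - (round w : ℝ) : ℝ) : AddCircle (1:ℝ))
        = ((w:ℝ) : AddCircle (1:ℝ)) - (((round w : ℝ)) : AddCircle (1:ℝ)) := by
      rw [← qm_coe, ← qm_coe, ← qm_coe, map_sub]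
    rw [h1, coe_int_zero, sub_zero]
  · rw [AddCircle.norm_eq]; simp
  · exact abs_sub_round w

lemma summable_mul_bdd {f g : Γ → ℝ} (hf : Summable fun t => |f t|) {C : ℝ}
    (hg : ∀ t, |g t| ≤ C) : Summable fun t => f t * g t := by
  have h1 : Summable fun t => |f t| * C := hf.mul_right C
  have h2 : ∀ t, |f t * g t| ≤ |f t| * C := fun t => by
    rw [abs_mul]; exact mul_le_mul_of_nonneg_left (hg t) (abs_nonneg _)
  exact Summable.of_abs (Summable.of_nonneg_of_le (fun t => abs_nonneg _) h2 h1)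

lemma summable_shift {f : Γ → ℝ} (hf : Summable fun t => |f t|) (u : Γ) :
    Summable fun v => |f (v * u⁻¹)| := by
  have := ((Equiv.mulRight u⁻¹).summable_iff (f := fun t => |f t|)).mpr hf
  exact this

lemma shift_tsum (f : Γ → ℝ) (g : Γ → ℝ) (u : Γ) :
    ∑' v, f (v * u⁻¹) * g v = ∑' t, f t * g (t * u) := by
  rw [← (Equiv.mulRight u).tsum_eq (fun v => f (v * u⁻¹) * g v)]
  apply tsum_congr; intro t
  simp [mul_inv_cancel_right]

lemma conv_coe (f : Γ → ℝ) (a : MonoidAlgebra ℤ Γ) (v : Γ) :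
    conv f (coeMA a) v = a.coeff.sum fun u c => (c:ℝ) * f (v * u⁻¹) := by
  classical
  rw [conv]
  rw [tsum_eq_sum (s := a.coeff.support.image fun u => v * u⁻¹) ?hz]
  case hz =>
    intro t ht
    have h0 : a.coeff (t⁻¹ * v) = 0 := by
      by_contra hne
      exact ht (Finset.mem_image.mpr ⟨t⁻¹ * v, Finsupp.mem_support_iff.mpr hne, by group⟩)
    simp [coeMA, h0]
  rw [Finset.sum_image (fun x _ y _ h => by
    have := mul_left_cancel h; exact inv_injective this)]
  rw [Finsupp.sum]
  refine Finset.sum_congr rfl fun u hu => ?_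
  have h1 : (v * u⁻¹)⁻¹ * v = u := by group
  rw [h1, mul_comm]
  rfl

end Stmt3

namespace Stmt3

variable {Γ : Type*} [Group Γ]

lemma main_identity {k : ℕ} (A : Matrix (Fin k) (Fin k) (MonoidAlgebra ℤ Γ))
    (B : Matrix (Fin k) (Fin k) (Γ → ℝ)) (hB : ∀ i j, MemL1 (B i j))
    (hBA : matConv B (coeMat A) = matOne)
    (y : Fin k → Γ → ℝ) {C : ℝ} (hy : ∀ j t, |y j t| ≤ C) (l : Fin k) (s : Γ) :
    y l s = ∑ i, ∑' t, B l i t * ∑ j, (A i j).coeff.sum fun u c => (c:ℝ) * y j (s * t * u) := by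
  classical
  have hBshift : ∀ (i : Fin k) (u : Γ), Summable fun v : Γ => |B l i (v * u⁻¹)| :=
    fun i u => summable_shift (hB l i) u
  -- Step 1
  have h1 : y l s = ∑ j : Fin k, ∑' v, matOne (Γ := Γ) (k := k) l j v * y j (s * v) := by
    rw [Finset.sum_eq_single l ?h2 ?h3]
    case h2 =>
      intro j _ hj
      have hz : ∀ v : Γ, matOne (Γ := Γ) (k := k) l j v * y j (s * v) = 0 := by
        intro v
        have : matOne (Γ := Γ) (k := k) l j v = 0 := by
          simp only [matOne]
          exact if_neg (fun h => hj h.1.symm)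
        rw [this, zero_mul]
      rw [tsum_congr hz, tsum_zero]
    case h3 => intro h; exact absurd (Finset.mem_univ l) h
    rw [tsum_eq_sum (s := ({1} : Finset Γ)) ?hz2]
    case hz2 =>
      intro v hv
      simp only [Finset.mem_singleton] at hv
      simp [matOne, hv]
    simp [matOne]
  -- Step 2 : expand matConv into conv_coe form
  have h2 : ∀ j v, matConv B (coeMat A) l j v
      = ∑ i, (A i j).coeff.sum fun u c => (c:ℝ) * B l i (v * u⁻¹) := by
    intro j v
    rw [matConv]
    exact Finset.sum_congr rfl fun i _ => conv_coe (B l i) (A i j) v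
  -- Step 3 : interchange per j
  have h3 : ∀ j : Fin k, ∑' v, (∑ i, (A i j).coeff.sum fun u c => (c:ℝ) * B l i (v * u⁻¹)) * y j (s * v)
      = ∑ i, (A i j).coeff.sum fun u c => (c:ℝ) * ∑' v, B l i (v * u⁻¹) * y j (s * v) := by
    intro j
    have e1 : ∀ v, (∑ i, (A i j).coeff.sum fun u c => (c:ℝ) * B l i (v * u⁻¹)) * y j (s * v)
        = ∑ i, ∑ u ∈ (A i j).coeff.support, (((A i j).coeff u : ℝ) * (B l i (v * u⁻¹) * y j (s * v))) := by
      intro v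
      rw [Finset.sum_mul]
      refine Finset.sum_congr rfl fun i _ => ?_
      rw [Finsupp.sum, Finset.sum_mul]
      exact Finset.sum_congr rfl fun u _ => by ring
    have hsum : ∀ (i : Fin k) (u : Γ),
        Summable fun v => ((A i j).coeff u : ℝ) * (B l i (v * u⁻¹) * y j (s * v)) :=
      fun i u => (summable_mul_bdd (hBshift i u) (fun v => hy j (s * v))).mul_left _
    rw [tsum_congr e1, Summable.tsum_finsetSum (fun i _ => summable_sum fun u _ => hsum i u)]
    refine Finset.sum_congr rfl fun i _ => ?_
    rw [Summable.tsum_finsetSum (fun u _ => hsum i u), Finsupp.sum]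
    exact Finset.sum_congr rfl fun u _ => tsum_mul_left
  -- Step 4 : change of variables
  have h4 : ∀ (i j : Fin k) (u : Γ),
      ∑' v, B l i (v * u⁻¹) * y j (s * v) = ∑' t, B l i t * y j (s * t * u) := by
    intro i j u
    rw [shift_tsum (B l i) (fun v => y j (s * v)) u]
    exact tsum_congr fun t => by rw [mul_assoc]
  -- Step 5 : reverse interchange per i
  have h5 : ∀ i : Fin k,
      ∑ j, ((A i j).coeff.sum fun u c => (c:ℝ) * ∑' t, B l i t * y j (s * t * u))
      = ∑' t, B l i t * ∑ j, (A i j).coeff.sum fun u c => (c:ℝ) * y j (s * t * u) := by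
    intro i
    have e1 : ∀ t, B l i t * ∑ j, ((A i j).coeff.sum fun u c => (c:ℝ) * y j (s * t * u))
        = ∑ j, ∑ u ∈ (A i j).coeff.support, (((A i j).coeff u : ℝ) * (B l i t * y j (s * t * u))) := by
      intro t
      rw [Finset.mul_sum]
      refine Finset.sum_congr rfl fun j _ => ?_
      rw [Finsupp.sum, Finset.mul_sum]
      exact Finset.sum_congr rfl fun u _ => by ring
    have hsum : ∀ (j : Fin k) (u : Γ),
        Summable fun t => ((A i j).coeff u : ℝ) * (B l i t * y j (s * t * u)) :=
      fun j u => (summable_mul_bdd (hB l i) (fun t => hy j (s * t * u))).mul_left _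
    rw [tsum_congr e1, Summable.tsum_finsetSum (fun j _ => summable_sum fun u _ => hsum j u)]
    refine (Finset.sum_congr rfl fun j _ => ?_).symm
    rw [Summable.tsum_finsetSum (fun u _ => hsum j u), Finsupp.sum]
    exact Finset.sum_congr rfl fun u _ => tsum_mul_left
  calc y l s = ∑ j : Fin k, ∑' v, matOne (Γ := Γ) (k := k) l j v * y j (s * v) := h1
    _ = ∑ j : Fin k, ∑' v, matConv B (coeMat A) l j v * y j (s * v) := by rw [hBA]
    _ = ∑ j : Fin k, ∑ i, (A i j).coeff.sum fun u c => (c:ℝ) * ∑' v, B l i (v * u⁻¹) * y j (s * v) := by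
        refine Finset.sum_congr rfl fun j _ => ?_
        rw [← h3 j]
        exact tsum_congr fun v => by rw [h2 j v]
    _ = ∑ j : Fin k, ∑ i, (A i j).coeff.sum fun u c => (c:ℝ) * ∑' t, B l i t * y j (s * t * u) := by
        refine Finset.sum_congr rfl fun j _ => Finset.sum_congr rfl fun i _ => ?_
        exact Finsupp.sum_congr fun u _ => by rw [h4 i j u]
    _ = ∑ i, ∑ j : Fin k, (A i j).coeff.sum fun u c => (c:ℝ) * ∑' t, B l i t * y j (s * t * u) :=
        Finset.sum_comm
    _ = ∑ i, ∑' t, B l i t * ∑ j, (A i j).coeff.sum fun u c => (c:ℝ) * y j (s * t * u) :=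
        Finset.sum_congr rfl fun i _ => h5 i

end Stmt3

namespace Stmt3

variable {Γ : Type*} [Group Γ]

lemma core {k : ℕ} (A : Matrix (Fin k) (Fin k) (MonoidAlgebra ℤ Γ))
    (B : Matrix (Fin k) (Fin k) (Γ → ℝ)) (hB : ∀ i j, MemL1 (B i j))
    (hBA : matConv B (coeMat A) = matOne)
    {x : Fin k → Γ → AddCircle (1:ℝ)} (hx : x ∈ XA A)
    {ε : ℝ} (hd : ∀ (j : Fin k) (s : Γ), dist (x j s) 0 ≤ ε)
    (hεN : ε * normL1 A < 1) : x = 0 := by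
  classical
  rcases Nat.eq_zero_or_pos k with hk | hk
  · subst hk; funext j; exact j.elim0
  have hε0 : 0 ≤ ε := le_trans dist_nonneg (hd ⟨0, hk⟩ 1)
  choose y hy1 hy2 hy3 using fun (j : Fin k) (s : Γ) => norm_lift (x j s)
  have hyb : ∀ (j : Fin k) (s : Γ), |y j s| ≤ ε := fun j s => by
    rw [hy2 j s, ← dist_zero_right]; exact hd j s
  set Z : Fin k → Γ → ℝ := fun i s => ∑ j, (A i j).coeff.sum fun u c => (c:ℝ) * y j (s * u)
    with hZ
  -- Z maps to 0 in ℝ/ℤ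
  have hZcoe : ∀ (i : Fin k) (s : Γ), ((Z i s : ℝ) : AddCircle (1:ℝ)) = 0 := by
    intro i s
    have h0 : mulStar x A i s = 0 := by
      have hx' : mulStar x A = 0 := hx
      rw [hx']; rfl
    rw [← h0, ← qm_coe]
    simp only [hZ]
    rw [map_sum]
    show _ = ∑ j, (A i j).coeff.sum fun u c => c • x j (s * u)
    refine Finset.sum_congr rfl fun j _ => ?_
    rw [Finsupp.sum, Finsupp.sum, map_sum]
    refine Finset.sum_congr rfl fun u _ => ?_
    rw [← zsmul_eq_mul, map_zsmul, qm_coe, hy1]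
  -- Z is small
  have hZbound : ∀ (i : Fin k) (s : Γ), |Z i s| ≤ ε * normL1 A := by
    intro i s
    have h1 : |Z i s| ≤ ∑ j, ∑ u ∈ (A i j).coeff.support, |((A i j).coeff u : ℝ)| * ε := by
      simp only [hZ]
      refine (Finset.abs_sum_le_sum_abs _ _).trans (Finset.sum_le_sum fun j _ => ?_)
      rw [Finsupp.sum]
      refine (Finset.abs_sum_le_sum_abs _ _).trans (Finset.sum_le_sum fun u _ => ?_)
      rw [abs_mul]
      exact mul_le_mul_of_nonneg_left (hyb j _) (abs_nonneg _)
    refine h1.trans ?_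
    have h2 : ∑ j, ∑ u ∈ (A i j).coeff.support, |((A i j).coeff u : ℝ)| * ε
        = (∑ j, (A i j).coeff.sum fun _ c => |(c : ℝ)|) * ε := by
      rw [Finset.sum_mul]
      refine Finset.sum_congr rfl fun j _ => ?_
      rw [Finsupp.sum, Finset.sum_mul]
    rw [h2, mul_comm]
    refine mul_le_mul_of_nonneg_left ?_ hε0
    rw [normL1]
    refine Finset.single_le_sum (f := fun i => ∑ j, (A i j).coeff.sum fun _ c => |(c : ℝ)|)
      (fun i _ => Finset.sum_nonneg fun j _ => by
        rw [Finsupp.sum]; exact Finset.sum_nonneg fun u _ => abs_nonneg _)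
      (Finset.mem_univ i)
  -- Z vanishes
  have hZ0 : ∀ (i : Fin k) (s : Γ), Z i s = 0 := by
    intro i s
    obtain ⟨n, hn⟩ := (AddCircle.coe_eq_zero_iff _).mp (hZcoe i s)
    have hne : Z i s = (n : ℝ) := by rw [← hn]; simp
    have habs : |(n : ℝ)| < 1 := by rw [← hne]; exact lt_of_le_of_lt (hZbound i s) hεN
    have hn1 : |n| < 1 := by exact_mod_cast habs
    have : n = 0 := by rw [abs_lt] at hn1; omega
    rw [hne, this]; simp
  -- y vanishes
  have hy0 : ∀ (l : Fin k) (s : Γ), y l s = 0 := by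
    intro l s
    rw [main_identity A B hB hBA y hyb l s]
    have he : ∀ (i : Fin k) (t : Γ),
        (∑ j, (A i j).coeff.sum fun u c => (c:ℝ) * y j (s * t * u)) = Z i (s * t) := by
      intro i t
      simp only [hZ]
    have hzero : ∀ (i : Fin k) (t : Γ),
        B l i t * ∑ j, (A i j).coeff.sum (fun u c => (c:ℝ) * y j (s * t * u)) = 0 := by
      intro i t; rw [he i t, hZ0 i (s * t), mul_zero]
    exact Finset.sum_eq_zero fun i _ => by rw [tsum_congr (hzero i), tsum_zero]
  funext j s
  rw [← hy1 j s, hy0 j s]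
  show qm 0 = _
  rw [map_zero]; rfl

end Stmt3

namespace Stmt3

variable {Γ : Type*} [Group Γ]

lemma dist_pi_half {k : ℕ} (x : Fin k → Γ → AddCircle (1:ℝ)) (s : Γ) :
    dist (fun j => x j s) (0 : Fin k → AddCircle (1 : ℝ)) ≤ 1/2 := by
  refine (dist_pi_le_iff (by norm_num)).mpr fun j => ?_
  obtain ⟨z, hz1, hz2, hz3⟩ := norm_lift (x j s)
  show dist (x j s) 0 ≤ 1/2
  rw [dist_zero_right, ← hz2]; exact hz3

lemma normL1_nonneg {k : ℕ} (A : Matrix (Fin k) (Fin k) (MonoidAlgebra ℤ Γ)) :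
    0 ≤ normL1 A := by
  rw [normL1]
  refine Finset.sum_nonneg fun i _ => Finset.sum_nonneg fun j _ => ?_
  rw [Finsupp.sum]; exact Finset.sum_nonneg fun u _ => abs_nonneg _

end Stmt3


open Stmt3 in
theorem stmt3 {Γ : Type*} [Group Γ] [Countable Γ] (k : ℕ)
    (A : Matrix (Fin k) (Fin k) (MonoidAlgebra ℤ Γ)) (hA : InvertibleL1 A) :
    (∀ x ∈ XA A, x ≠ 0 →
      (normL1 A)⁻¹ ≤ ⨆ s : Γ, dist (fun j => x j s) (0 : Fin k → AddCircle (1 : ℝ))) ∧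
    ShiftExpansive (XA A) := by
  obtain ⟨B, hB, hAB, hBA⟩ := hA
  have hbdd : ∀ x : Fin k → Γ → AddCircle (1:ℝ),
      BddAbove (Set.range fun s : Γ => dist (fun j => x j s) (0 : Fin k → AddCircle (1 : ℝ))) :=
    fun x => ⟨1/2, by rintro r ⟨s, rfl⟩; exact dist_pi_half x s⟩
  have hsup0 : ∀ x : Fin k → Γ → AddCircle (1:ℝ),
      0 ≤ ⨆ s : Γ, dist (fun j => x j s) (0 : Fin k → AddCircle (1 : ℝ)) :=
    fun x => Real.iSup_nonneg fun s => dist_nonneg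
  have hcoord : ∀ (x : Fin k → Γ → AddCircle (1:ℝ)) (j : Fin k) (s : Γ),
      dist (x j s) 0 ≤ ⨆ s : Γ, dist (fun j => x j s) (0 : Fin k → AddCircle (1 : ℝ)) :=
    fun x j s => le_trans (dist_le_pi_dist (fun j => x j s) 0 j) (le_ciSup (hbdd x) s)
  have hN0 := normL1_nonneg A
  constructor
  · intro x hx hne
    by_contra hcon
    push_neg at hcon
    have h0 : 0 < (normL1 A)⁻¹ := lt_of_le_of_lt (hsup0 x) hcon
    have hN : 0 < normL1 A := inv_pos.mp h0
    have hmul : (⨆ s : Γ, dist (fun j => x j s) (0 : Fin k → AddCircle (1 : ℝ))) * normL1 A < 1 := by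
      have h2 := mul_lt_mul_of_pos_right hcon hN
      rwa [inv_mul_cancel₀ (ne_of_gt hN)] at h2
    exact hne (core A B hB hBA hx (hcoord x) hmul)
  · refine ⟨(normL1 A + 1)⁻¹, inv_pos.mpr (by linarith), fun x hx hlt => ?_⟩
    have h1 : (⨆ s : Γ, dist (fun j => x j s) (0 : Fin k → AddCircle (1 : ℝ))) * (normL1 A + 1) < 1 := by
      have h2 := mul_lt_mul_of_pos_right hlt (show (0:ℝ) < normL1 A + 1 by linarith)
      rwa [inv_mul_cancel₀ (by linarith : normL1 A + 1 ≠ 0)] at h2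
    have hmul : (⨆ s : Γ, dist (fun j => x j s) (0 : Fin k → AddCircle (1 : ℝ))) * normL1 A < 1 := by
      have h3 : (⨆ s : Γ, dist (fun j => x j s) (0 : Fin k → AddCircle (1 : ℝ))) * normL1 A
          ≤ (⨆ s : Γ, dist (fun j => x j s) (0 : Fin k → AddCircle (1 : ℝ))) * (normL1 A + 1) :=
        mul_le_mul_of_nonneg_left (by linarith) (hsup0 x)
      linarith
    exact core A B hB hBA hx (hcoord x) hmul
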